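/- Let d ≥ 2 and let a, b be real numbers. Define the Werner matrix X^{wer}_{a,b} = a(I_d ⊗ I_d) + b·Σ_{i,j=1}^d |ij⟩⟨ji| and the isotropic matrix X^{iso}_{a,b} = a(I_d ⊗ I_d) + b·Σ_{i,j=1}^d |ii⟩⟨jj| in M_d(ℂ)⊗M_d(ℂ). Then the following are equivalent: (i) X^{wer}_{a,b} is PPT; (ii) X^{wer}_{a,b} is separable; (iii) X^{iso}_{a,b} is separable; (iv) X^{iso}_{a,b} is PPT; (v) a ≥ 0 and −a/d ≤ b ≤ a. -/

import Mathlib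

open Matrix Kronecker
open scoped ComplexOrder

/-- A bipartite matrix is separable if it is a finite sum of Kronecker products of
rank-one matrices `v v^*` and `w w^*`. -/
def Separable {d : ℕ} (X : Matrix (Fin d × Fin d) (Fin d × Fin d) ℂ) : Prop :=
  ∃ (n : ℕ) (v w : Fin n → Fin d → ℂ),
    X = ∑ k, (Matrix.vecMulVec (v k) (star (v k))) ⊗ₖ (Matrix.vecMulVec (w k) (star (w k)))

/-- The partial transpose (on the second factor) of a bipartite matrix:
`⟨ik|X^Γ|jl⟩ = ⟨il|X|jk⟩`. -/
def partialTranspose {d : ℕ} (X : Matrix (Fin d × Fin d) (Fin d × Fin d) ℂ) :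
    Matrix (Fin d × Fin d) (Fin d × Fin d) ℂ :=
  Matrix.of fun p q => X (p.1, q.2) (q.1, p.2)

/-- A bipartite matrix is PPT if both it and its partial transpose are
positive semidefinite. -/
def IsPPT {d : ℕ} (X : Matrix (Fin d × Fin d) (Fin d × Fin d) ℂ) : Prop :=
  X.PosSemidef ∧ (partialTranspose X).PosSemidef

/-- The Werner matrix `a (I ⊗ I) + b Σ_{i,j} |ij⟩⟨ji|`. -/
noncomputable def werner (d : ℕ) (a b : ℝ) :
    Matrix (Fin d × Fin d) (Fin d × Fin d) ℂ :=
  (a : ℂ) • (1 : Matrix (Fin d × Fin d) (Fin d × Fin d) ℂ) +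
    (b : ℂ) • (Matrix.of fun p q => if p.1 = q.2 ∧ p.2 = q.1 then (1 : ℂ) else 0)

/-- The isotropic matrix `a (I ⊗ I) + b Σ_{i,j} |ii⟩⟨jj|`. -/
noncomputable def isotropic (d : ℕ) (a b : ℝ) :
    Matrix (Fin d × Fin d) (Fin d × Fin d) ℂ :=
  (a : ℂ) • (1 : Matrix (Fin d × Fin d) (Fin d × Fin d) ℂ) +
    (b : ℂ) • (Matrix.of fun p q => if p.1 = p.2 ∧ q.1 = q.2 then (1 : ℂ) else 0)

lemma separable_of_fintype {d : ℕ} {K : Type} [Fintype K] (v w : K → Fin d → ℂ)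
    {X : Matrix (Fin d × Fin d) (Fin d × Fin d) ℂ}
    (h : X = ∑ k, (vecMulVec (v k) (star (v k))) ⊗ₖ (vecMulVec (w k) (star (w k)))) :
    Separable X := by
  classical
  let e := Fintype.equivFin K
  refine ⟨Fintype.card K, v ∘ e.symm, w ∘ e.symm, ?_⟩
  rw [h]
  exact (Equiv.sum_comp e.symm _).symm

lemma Separable.add {d : ℕ} {X Y : Matrix (Fin d × Fin d) (Fin d × Fin d) ℂ}
    (hX : Separable X) (hY : Separable Y) : Separable (X + Y) := by
  obtain ⟨n, v1, w1, h1⟩ := hX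
  obtain ⟨m, v2, w2, h2⟩ := hY
  refine separable_of_fintype (K := Fin n ⊕ Fin m) (Sum.elim v1 v2) (Sum.elim w1 w2) ?_
  rw [h1, h2, Fintype.sum_sum_type]
  simp

lemma Separable.smul {d : ℕ} {X : Matrix (Fin d × Fin d) (Fin d × Fin d) ℂ}
    {t : ℝ} (ht : 0 ≤ t) (hX : Separable X) : Separable ((t : ℂ) • X) := by
  obtain ⟨n, v, w, h⟩ := hX
  refine ⟨n, v, fun k => (Real.sqrt t : ℂ) • w k, ?_⟩
  rw [h, Finset.smul_sum]
  congr 1; ext k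
  have hw : vecMulVec ((Real.sqrt t : ℂ) • w k) (star ((Real.sqrt t : ℂ) • w k))
      = (t : ℂ) • vecMulVec (w k) (star (w k)) := by
    ext i j
    simp [vecMulVec, Pi.smul_apply, smul_eq_mul]
    rw [mul_mul_mul_comm, ← Complex.ofReal_mul, Real.mul_self_sqrt ht]
  rw [hw, Matrix.kronecker_smul]

lemma posSemidef_outer {ι : Type} [Fintype ι] [DecidableEq ι] (v : ι → ℂ) :
    (vecMulVec v (star v)).PosSemidef := by
  refine Matrix.PosSemidef.of_dotProduct_mulVec_nonneg ?_ ?_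
  · ext i j
    simp [vecMulVec, conjTranspose_apply, mul_comm]
  · intro x
    have : dotProduct (star x) ((vecMulVec v (star v)) *ᵥ x)
        = star (dotProduct (star v) x) * (dotProduct (star v) x) := by
      simp [dotProduct, mulVec, vecMulVec, Finset.mul_sum, Finset.sum_mul]
      rw [Finset.sum_comm]
      congr 1; ext i; congr 1; ext j; ring
    rw [this]
    exact star_mul_self_nonneg _

lemma kron_outer {d : ℕ} (v w : Fin d → ℂ) :
    (vecMulVec v (star v)) ⊗ₖ (vecMulVec w (star w))
      = vecMulVec (fun p : Fin d × Fin d => v p.1 * w p.2)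
          (star fun p : Fin d × Fin d => v p.1 * w p.2) := by
  ext ⟨i1, i2⟩ ⟨j1, j2⟩
  simp [vecMulVec, kroneckerMap_apply]
  ring

lemma Separable.posSemidef {d : ℕ} {X : Matrix (Fin d × Fin d) (Fin d × Fin d) ℂ}
    (hX : Separable X) : X.PosSemidef := by
  obtain ⟨n, v, w, rfl⟩ := hX
  refine Finset.sum_induction _ _ (fun A B hA hB => hA.add hB) Matrix.PosSemidef.zero ?_
  intro k _
  rw [kron_outer]
  exact posSemidef_outer _

lemma Separable.partialTranspose {d : ℕ} {X : Matrix (Fin d × Fin d) (Fin d × Fin d) ℂ}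
    (hX : Separable X) : Separable (partialTranspose X) := by
  obtain ⟨n, v, w, rfl⟩ := hX
  refine ⟨n, v, fun k => star (w k), ?_⟩
  ext ⟨i1, i2⟩ ⟨j1, j2⟩
  simp only [_root_.partialTranspose, of_apply, Matrix.sum_apply, kroneckerMap_apply,
    vecMulVec_apply, Pi.star_apply, RCLike.star_def]
  refine Finset.sum_congr rfl fun k _ => ?_
  simp only [Complex.conj_conj]
  ring

lemma pT_werner {d : ℕ} (a b : ℝ) : partialTranspose (werner d a b) = isotropic d a b := by
  ext ⟨i1, i2⟩ ⟨j1, j2⟩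
  simp only [partialTranspose, werner, isotropic, of_apply, Matrix.add_apply, Matrix.smul_apply,
    Matrix.one_apply, smul_eq_mul]
  have e1 : ((i1, j2) = (j1, i2)) ↔ ((i1, i2) = (j1, j2)) := by
    simp only [Prod.ext_iff]
    exact ⟨fun h => ⟨h.1, h.2.symm⟩, fun h => ⟨h.1, h.2.symm⟩⟩
  have e2 : (i1 = i2 ∧ j2 = j1) ↔ (i1 = i2 ∧ j1 = j2) :=
    ⟨fun h => ⟨h.1, h.2.symm⟩, fun h => ⟨h.1, h.2.symm⟩⟩
  rw [if_congr e1 rfl rfl, if_congr e2 rfl rfl]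

lemma pT_isotropic {d : ℕ} (a b : ℝ) : partialTranspose (isotropic d a b) = werner d a b := by
  ext ⟨i1, i2⟩ ⟨j1, j2⟩
  simp only [partialTranspose, werner, isotropic, of_apply, Matrix.add_apply, Matrix.smul_apply,
    Matrix.one_apply, smul_eq_mul]
  have e1 : ((i1, j2) = (j1, i2)) ↔ ((i1, i2) = (j1, j2)) := by
    simp only [Prod.ext_iff]
    exact ⟨fun h => ⟨h.1, h.2.symm⟩, fun h => ⟨h.1, h.2.symm⟩⟩
  have e2 : (i1 = j2 ∧ j1 = i2) ↔ (i1 = j2 ∧ i2 = j1) :=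
    ⟨fun h => ⟨h.1, h.2.symm⟩, fun h => ⟨h.1, h.2.symm⟩⟩
  rw [if_congr e1 rfl rfl, if_congr e2 rfl rfl]

lemma sum4 (a b : ℕ) (ha : a ≤ 2) (hb : b ≤ 2) :
    (∑ k : Fin 4, Complex.I ^ ((k : ℕ) * a) * (-Complex.I) ^ ((k : ℕ) * b))
      = if a = b then 4 else 0 := by
  interval_cases a <;> interval_cases b <;>
    simp only [Fin.sum_univ_four, Fin.val_zero, Fin.val_one, Fin.val_two,
      show ((3 : Fin 4) : ℕ) = 3 from rfl] <;>
    norm_num [pow_succ, Complex.I_sq]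

lemma prod_pow_ite {d : ℕ} (c : Fin d → Fin 4) (z : ℂ) (i : Fin d) :
    (∏ m : Fin d, z ^ ((c m : ℕ) * (if i = m then 1 else 0))) = z ^ (c i : ℕ) := by
  rw [Finset.prod_congr rfl (fun m _ => show z ^ ((c m : ℕ) * (if i = m then 1 else 0))
      = if i = m then z ^ (c m : ℕ) else 1 from by split_ifs <;> simp)]
  simp [Finset.prod_ite_eq]

lemma indic_werner {α : Type} [DecidableEq α] (i1 i2 j1 j2 : α) :
    (∀ m : α, ((if i1 = m then 1 else 0) + (if i2 = m then 1 else 0) : ℕ)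
        = (if j1 = m then 1 else 0) + (if j2 = m then 1 else 0))
      ↔ ((i1 = j1 ∧ i2 = j2) ∨ (i1 = j2 ∧ i2 = j1)) := by
  constructor
  · intro h
    by_cases h1 : i1 = j1
    · subst h1
      by_cases hj : j2 = i2
      · exact Or.inl ⟨rfl, hj.symm⟩
      · exfalso
        have h2 := h i2
        rw [if_pos rfl, if_neg hj] at h2
        split_ifs at h2 <;> omega
    · have ha := h i1
      rw [if_pos rfl, if_neg (show ¬j1 = i1 from fun hh => h1 hh.symm)] at ha
      have hj2 : j2 = i1 := by
        by_contra hx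
        rw [if_neg hx] at ha
        split_ifs at ha <;> omega
      rw [if_pos hj2] at ha
      have hi2 : ¬ i2 = i1 := by intro hx; rw [if_pos hx] at ha; omega
      have hb := h i2
      rw [if_pos rfl, if_neg (show ¬i1 = i2 from fun hh => hi2 hh.symm),
        if_neg (show ¬j2 = i2 from fun hh => hi2 (hj2.symm.trans hh).symm)] at hb
      have hj1 : j1 = i2 := by by_contra hx; rw [if_neg hx] at hb; omega
      exact Or.inr ⟨hj2.symm, hj1.symm⟩
  · rintro (⟨h1, h2⟩ | ⟨h1, h2⟩) <;> subst h1 <;> subst h2 <;> intro m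
    · rfl
    · exact add_comm _ _

lemma indic_iso {α : Type} [DecidableEq α] (i1 i2 j1 j2 : α) :
    (∀ m : α, ((if i1 = m then 1 else 0) + (if j2 = m then 1 else 0) : ℕ)
        = (if j1 = m then 1 else 0) + (if i2 = m then 1 else 0))
      ↔ ((i1 = j1 ∧ i2 = j2) ∨ (i1 = i2 ∧ j1 = j2)) := by
  rw [indic_werner i1 j2 j1 i2]
  constructor
  · rintro (⟨p, q⟩ | ⟨p, q⟩)
    · exact Or.inl ⟨p, q.symm⟩
    · exact Or.inr ⟨p, q.symm⟩
  · rintro (⟨p, q⟩ | ⟨p, q⟩)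
    · exact Or.inl ⟨p, q.symm⟩
    · exact Or.inr ⟨p, q.symm⟩

lemma sum_char {d : ℕ} (A B : Fin d → ℕ) (hA : ∀ m, A m ≤ 2) (hB : ∀ m, B m ≤ 2) :
    (∑ c : Fin d → Fin 4,
        ∏ m, (Complex.I ^ ((c m : ℕ) * A m) * (-Complex.I) ^ ((c m : ℕ) * B m)))
      = if (∀ m, A m = B m) then (4 : ℂ) ^ d else 0 := by
  rw [← Fintype.prod_sum (κ := fun _ : Fin d => Fin 4)
    (f := fun m k => Complex.I ^ ((k : ℕ) * A m) * (-Complex.I) ^ ((k : ℕ) * B m))]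
  by_cases h : ∀ m, A m = B m
  · rw [if_pos h,
      Finset.prod_congr rfl (fun m _ => by rw [sum4 _ _ (hA m) (hB m), if_pos (h m)])]
    simp
  · rw [if_neg h]
    push_neg at h
    obtain ⟨m0, hm0⟩ := h
    rw [Finset.prod_congr rfl (fun m _ => sum4 _ _ (hA m) (hB m))]
    exact Finset.prod_eq_zero (Finset.mem_univ m0) (if_neg hm0)

lemma prod_char {d : ℕ} (c : Fin d → Fin 4) (x1 x2 y1 y2 : Fin d) :
    (∏ m : Fin d,
        Complex.I ^ ((c m : ℕ) * ((if x1 = m then 1 else 0) + (if x2 = m then 1 else 0)))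
          * (-Complex.I) ^ ((c m : ℕ) * ((if y1 = m then 1 else 0) + (if y2 = m then 1 else 0))))
      = Complex.I ^ (c x1 : ℕ) * Complex.I ^ (c x2 : ℕ)
          * ((-Complex.I) ^ (c y1 : ℕ) * (-Complex.I) ^ (c y2 : ℕ)) := by
  rw [Finset.prod_congr rfl (fun m _ => by
    rw [Nat.mul_add ((c m : ℕ)), Nat.mul_add ((c m : ℕ)), pow_add, pow_add])]
  rw [Finset.prod_mul_distrib, Finset.prod_mul_distrib, Finset.prod_mul_distrib,
    prod_pow_ite, prod_pow_ite, prod_pow_ite, prod_pow_ite]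

lemma ite_oa (x : ℂ) (A B C : Prop) [Decidable A] [Decidable B] [Decidable C]
    (hCA : C → A) (hCB : C → B) (hABC : A → B → C) :
    (if A ∨ B then x else 0)
      = ((if A then x else 0) + (if B then x else 0)) - (if C then x else 0) := by
  by_cases hA : A <;> by_cases hB : B
  · rw [if_pos (Or.inl hA), if_pos hA, if_pos hB, if_pos (hABC hA hB)]; ring
  · rw [if_pos (Or.inl hA), if_pos hA, if_neg hB, if_neg (fun hC => hB (hCB hC))]; ring
  · rw [if_pos (Or.inr hB), if_neg hA, if_pos hB, if_neg (fun hC => hA (hCA hC))]; ring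
  · rw [if_neg (fun h => h.elim hA hB), if_neg hA, if_neg hB,
      if_neg (fun hC => hB (hCB hC))]; ring

def Fm (d : ℕ) : Matrix (Fin d × Fin d) (Fin d × Fin d) ℂ :=
  Matrix.of fun p q => if p.1 = q.2 ∧ p.2 = q.1 then (1 : ℂ) else 0

def Qm (d : ℕ) : Matrix (Fin d × Fin d) (Fin d × Fin d) ℂ :=
  Matrix.of fun p q => if p.1 = p.2 ∧ q.1 = q.2 then (1 : ℂ) else 0

def Dm (d : ℕ) : Matrix (Fin d × Fin d) (Fin d × Fin d) ℂ :=
  Matrix.of fun p q => if p = q ∧ p.1 = p.2 then (1 : ℂ) else 0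

lemma key_w11 (d : ℕ) :
    (∑ c : Fin d → Fin 4,
        vecMulVec (fun m => Complex.I ^ (c m : ℕ)) (star fun m => Complex.I ^ (c m : ℕ))
          ⊗ₖ vecMulVec (fun m => Complex.I ^ (c m : ℕ)) (star fun m => Complex.I ^ (c m : ℕ)))
      = ((4 : ℂ) ^ d) • (1 + Fm d - Dm d) := by
  ext ⟨i1, i2⟩ ⟨j1, j2⟩
  rw [Matrix.sum_apply]
  have e : ∀ c : Fin d → Fin 4,
      ((vecMulVec (fun m => Complex.I ^ (c m : ℕ)) (star fun m => Complex.I ^ (c m : ℕ))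
          ⊗ₖ vecMulVec (fun m => Complex.I ^ (c m : ℕ)) (star fun m => Complex.I ^ (c m : ℕ)))
        (i1, i2) (j1, j2))
        = ∏ m : Fin d,
            Complex.I ^ ((c m : ℕ) * ((if i1 = m then 1 else 0) + (if i2 = m then 1 else 0)))
              * (-Complex.I) ^ ((c m : ℕ) * ((if j1 = m then 1 else 0) + (if j2 = m then 1 else 0))) := by
    intro c
    rw [prod_char]
    simp only [kroneckerMap_apply, vecMulVec_apply, Pi.star_apply, RCLike.star_def, map_pow,
      Complex.conj_I]
    ring
  rw [Finset.sum_congr rfl fun c _ => e c,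
    sum_char _ _ (fun m => by split_ifs <;> omega) (fun m => by split_ifs <;> omega),
    if_congr (indic_werner i1 i2 j1 j2) rfl rfl]
  simp only [Matrix.smul_apply, Matrix.add_apply, Matrix.sub_apply, Matrix.one_apply, Fm, Dm,
    of_apply, smul_eq_mul, Prod.mk.injEq, mul_add, mul_sub, mul_ite, mul_one, mul_zero]
  exact ite_oa _ _ _ _ (fun hC => hC.1)
    (fun hC => ⟨hC.2.trans hC.1.2, hC.2.symm.trans hC.1.1⟩)
    (fun hA hB => ⟨hA, hB.1.trans hA.2.symm⟩)

lemma key_iso11 (d : ℕ) :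
    (∑ c : Fin d → Fin 4,
        vecMulVec (fun m => Complex.I ^ (c m : ℕ)) (star fun m => Complex.I ^ (c m : ℕ))
          ⊗ₖ vecMulVec (fun m => (-Complex.I) ^ (c m : ℕ)) (star fun m => (-Complex.I) ^ (c m : ℕ)))
      = ((4 : ℂ) ^ d) • (1 + Qm d - Dm d) := by
  ext ⟨i1, i2⟩ ⟨j1, j2⟩
  rw [Matrix.sum_apply]
  have e : ∀ c : Fin d → Fin 4,
      ((vecMulVec (fun m => Complex.I ^ (c m : ℕ)) (star fun m => Complex.I ^ (c m : ℕ))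
          ⊗ₖ vecMulVec (fun m => (-Complex.I) ^ (c m : ℕ)) (star fun m => (-Complex.I) ^ (c m : ℕ)))
        (i1, i2) (j1, j2))
        = ∏ m : Fin d,
            Complex.I ^ ((c m : ℕ) * ((if i1 = m then 1 else 0) + (if j2 = m then 1 else 0)))
              * (-Complex.I) ^ ((c m : ℕ) * ((if j1 = m then 1 else 0) + (if i2 = m then 1 else 0))) := by
    intro c
    rw [prod_char]
    simp only [kroneckerMap_apply, vecMulVec_apply, Pi.star_apply, RCLike.star_def, map_pow,
      Complex.conj_I, map_neg, neg_neg]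
    ring
  rw [Finset.sum_congr rfl fun c _ => e c,
    sum_char _ _ (fun m => by split_ifs <;> omega) (fun m => by split_ifs <;> omega),
    if_congr (indic_iso i1 i2 j1 j2) rfl rfl]
  simp only [Matrix.smul_apply, Matrix.add_apply, Matrix.sub_apply, Matrix.one_apply, Qm, Dm,
    of_apply, smul_eq_mul, Prod.mk.injEq, mul_add, mul_sub, mul_ite, mul_one, mul_zero]
  exact ite_oa _ _ _ _ (fun hC => hC.1)
    (fun hC => ⟨hC.2, hC.1.1.symm.trans (hC.2.trans hC.1.2)⟩)
    (fun hA hB => ⟨hA, hB.1⟩)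

lemma zz_sum {d : ℕ} (i2 j2 : Fin d) :
    (∑ k : Fin d, ((d : ℂ) * (if k = i2 then 1 else 0) - 1)
        * ((d : ℂ) * (if k = j2 then 1 else 0) - 1))
      = (d : ℂ) * ((d : ℂ) * (if i2 = j2 then 1 else 0) - 1) := by
  have expand : ∀ k : Fin d,
      ((d : ℂ) * (if k = i2 then 1 else 0) - 1) * ((d : ℂ) * (if k = j2 then 1 else 0) - 1)
        = (d : ℂ) ^ 2 * ((if k = i2 then (1:ℂ) else 0) * (if k = j2 then (1:ℂ) else 0))
            - (d : ℂ) * (if k = i2 then (1:ℂ) else 0)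
            - (d : ℂ) * (if k = j2 then (1:ℂ) else 0) + 1 := fun k => by ring
  rw [Finset.sum_congr rfl fun k _ => expand k]
  have h3 : (∑ k : Fin d, (if k = i2 then (1:ℂ) else 0) * (if k = j2 then (1:ℂ) else 0))
      = if i2 = j2 then 1 else 0 := by
    rw [Finset.sum_congr rfl fun k _ => show (if k = i2 then (1:ℂ) else 0) * (if k = j2 then (1:ℂ) else 0)
        = if k = i2 then (if i2 = j2 then (1:ℂ) else 0) else 0 from by
      split_ifs with h1 h2 h3 h4 <;> simp_all]
    simp
  simp only [Finset.sum_add_distrib, Finset.sum_sub_distrib, ← Finset.mul_sum, h3]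
  simp [Finset.card_univ]
  split_ifs <;> ring

lemma key_wd (d : ℕ) :
    (∑ ck : (Fin d → Fin 4) × Fin d,
        vecMulVec (fun m => Complex.I ^ (ck.1 m : ℕ)) (star fun m => Complex.I ^ (ck.1 m : ℕ))
          ⊗ₖ vecMulVec (fun m => Complex.I ^ (ck.1 m : ℕ) * ((d : ℂ) * (if ck.2 = m then 1 else 0) - 1))
              (star fun m => Complex.I ^ (ck.1 m : ℕ) * ((d : ℂ) * (if ck.2 = m then 1 else 0) - 1)))
      = ((4 : ℂ) ^ d * d) • (((d : ℂ) - 1) • 1 - Fm d + Dm d) := by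
  ext ⟨i1, i2⟩ ⟨j1, j2⟩
  rw [Matrix.sum_apply, Fintype.sum_prod_type]
  have e : ∀ (c : Fin d → Fin 4) (k : Fin d),
      ((vecMulVec (fun m => Complex.I ^ (c m : ℕ)) (star fun m => Complex.I ^ (c m : ℕ))
          ⊗ₖ vecMulVec (fun m => Complex.I ^ (c m : ℕ) * ((d : ℂ) * (if k = m then 1 else 0) - 1))
              (star fun m => Complex.I ^ (c m : ℕ) * ((d : ℂ) * (if k = m then 1 else 0) - 1)))
        (i1, i2) (j1, j2))
        = (∏ m : Fin d,
            Complex.I ^ ((c m : ℕ) * ((if i1 = m then 1 else 0) + (if i2 = m then 1 else 0)))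
              * (-Complex.I) ^ ((c m : ℕ) * ((if j1 = m then 1 else 0) + (if j2 = m then 1 else 0))))
          * (((d : ℂ) * (if k = i2 then 1 else 0) - 1) * ((d : ℂ) * (if k = j2 then 1 else 0) - 1)) := by
    intro c k
    rw [prod_char]
    simp only [kroneckerMap_apply, vecMulVec_apply, Pi.star_apply, RCLike.star_def, map_pow,
      Complex.conj_I, _root_.map_mul, map_sub, _root_.map_one, map_natCast,
      apply_ite (starRingEnd ℂ), map_zero]
    ring
  rw [Finset.sum_congr rfl fun c _ => Finset.sum_congr rfl fun k _ => e c k]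
  rw [Finset.sum_congr rfl fun c _ => (Finset.mul_sum _ _ _).symm, ← Finset.sum_mul]
  rw [sum_char _ _ (fun m => by split_ifs <;> omega) (fun m => by split_ifs <;> omega),
    if_congr (indic_werner i1 i2 j1 j2) rfl rfl, zz_sum i2 j2]
  simp only [Matrix.smul_apply, Matrix.add_apply, Matrix.sub_apply, Matrix.one_apply,
    Fm, Dm, of_apply, smul_eq_mul, Prod.mk.injEq]
  by_cases hA : i1 = j1 ∧ i2 = j2 <;> by_cases hB : i1 = j2 ∧ i2 = j1
  · rw [if_pos (Or.inl hA), if_pos hA.2, if_pos hA, if_pos hB,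
      if_pos ⟨hA, hB.1.trans hA.2.symm⟩]; ring
  · rw [if_pos (Or.inl hA), if_pos hA.2, if_pos hA, if_neg hB,
      if_neg (fun hC => hB ⟨hC.2.trans hC.1.2, hC.2.symm.trans hC.1.1⟩)]; ring
  · have hI : ¬ i2 = j2 := fun h => hA ⟨hB.1.trans (h.symm.trans hB.2), h⟩
    rw [if_pos (Or.inr hB), if_neg hI, if_neg hA, if_pos hB, if_neg (fun hC => hA hC.1)]; ring
  · rw [if_neg (fun h => h.elim hA hB), if_neg hA, if_neg hB,
      if_neg (show ¬((i1 = j1 ∧ i2 = j2) ∧ i1 = i2) from fun hC => hA hC.1)]; ring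

lemma key_isod (d : ℕ) :
    (∑ ck : (Fin d → Fin 4) × Fin d,
        vecMulVec (fun m => Complex.I ^ (ck.1 m : ℕ)) (star fun m => Complex.I ^ (ck.1 m : ℕ))
          ⊗ₖ vecMulVec (fun m => (-Complex.I) ^ (ck.1 m : ℕ) * ((d : ℂ) * (if ck.2 = m then 1 else 0) - 1))
              (star fun m => (-Complex.I) ^ (ck.1 m : ℕ) * ((d : ℂ) * (if ck.2 = m then 1 else 0) - 1)))
      = ((4 : ℂ) ^ d * d) • (((d : ℂ) - 1) • 1 - Qm d + Dm d) := by
  ext ⟨i1, i2⟩ ⟨j1, j2⟩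
  rw [Matrix.sum_apply, Fintype.sum_prod_type]
  have e : ∀ (c : Fin d → Fin 4) (k : Fin d),
      ((vecMulVec (fun m => Complex.I ^ (c m : ℕ)) (star fun m => Complex.I ^ (c m : ℕ))
          ⊗ₖ vecMulVec (fun m => (-Complex.I) ^ (c m : ℕ) * ((d : ℂ) * (if k = m then 1 else 0) - 1))
              (star fun m => (-Complex.I) ^ (c m : ℕ) * ((d : ℂ) * (if k = m then 1 else 0) - 1)))
        (i1, i2) (j1, j2))
        = (∏ m : Fin d,
            Complex.I ^ ((c m : ℕ) * ((if i1 = m then 1 else 0) + (if j2 = m then 1 else 0)))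
              * (-Complex.I) ^ ((c m : ℕ) * ((if j1 = m then 1 else 0) + (if i2 = m then 1 else 0))))
          * (((d : ℂ) * (if k = i2 then 1 else 0) - 1) * ((d : ℂ) * (if k = j2 then 1 else 0) - 1)) := by
    intro c k
    rw [prod_char]
    simp only [kroneckerMap_apply, vecMulVec_apply, Pi.star_apply, RCLike.star_def, map_pow,
      Complex.conj_I, _root_.map_mul, map_sub, _root_.map_one, map_natCast,
      apply_ite (starRingEnd ℂ), map_zero, map_neg, neg_neg]
    ring
  rw [Finset.sum_congr rfl fun c _ => Finset.sum_congr rfl fun k _ => e c k]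
  rw [Finset.sum_congr rfl fun c _ => (Finset.mul_sum _ _ _).symm, ← Finset.sum_mul]
  rw [sum_char _ _ (fun m => by split_ifs <;> omega) (fun m => by split_ifs <;> omega),
    if_congr (indic_iso i1 i2 j1 j2) rfl rfl, zz_sum i2 j2]
  simp only [Matrix.smul_apply, Matrix.add_apply, Matrix.sub_apply, Matrix.one_apply,
    Qm, Dm, of_apply, smul_eq_mul, Prod.mk.injEq]
  by_cases hA : i1 = j1 ∧ i2 = j2 <;> by_cases hB : i1 = i2 ∧ j1 = j2
  · rw [if_pos (Or.inl hA), if_pos hA.2, if_pos hA, if_pos hB, if_pos ⟨hA, hB.1⟩]; ring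
  · rw [if_pos (Or.inl hA), if_pos hA.2, if_pos hA, if_neg hB,
      if_neg (fun hC => hB ⟨hC.2, hC.1.1.symm.trans (hC.2.trans hC.1.2)⟩)]; ring
  · have hI : ¬ i2 = j2 := fun h => hA ⟨hB.1.trans (h.trans hB.2.symm), h⟩
    rw [if_pos (Or.inr hB), if_neg hI, if_neg hA, if_pos hB, if_neg (fun hC => hA hC.1)]; ring
  · rw [if_neg (fun h => h.elim hA hB), if_neg hA, if_neg hB,
      if_neg (show ¬((i1 = j1 ∧ i2 = j2) ∧ i1 = i2) from fun hC => hA hC.1)]; ring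

lemma sum_ii {d : ℕ} (i j : Fin d) :
    (∑ k : Fin d, (if k = i then (1 : ℂ) else 0) * (if k = j then (1 : ℂ) else 0))
      = if i = j then 1 else 0 := by
  rw [Finset.sum_congr rfl fun k _ =>
    show (if k = i then (1 : ℂ) else 0) * (if k = j then (1 : ℂ) else 0)
      = if k = i then (if i = j then (1 : ℂ) else 0) else 0 from by
      split_ifs <;> first | (exfalso; simp only [Fin.ext_iff] at *; omega) | norm_num]
  simp

lemma sep_one (d : ℕ) : Separable (1 : Matrix (Fin d × Fin d) (Fin d × Fin d) ℂ) := by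
  refine separable_of_fintype (K := Fin d × Fin d)
    (fun ij => fun m => if m = ij.1 then 1 else 0)
    (fun ij => fun m => if m = ij.2 then 1 else 0) ?_
  ext ⟨i1, i2⟩ ⟨j1, j2⟩
  rw [Matrix.sum_apply, Fintype.sum_prod_type]
  simp only [kroneckerMap_apply, vecMulVec_apply, Pi.star_apply, RCLike.star_def,
    apply_ite (starRingEnd ℂ), _root_.map_one, map_zero, Matrix.one_apply]
  rw [Finset.sum_congr rfl fun x1 _ => Finset.sum_congr rfl fun x2 _ =>
    show ((if i1 = x1 then (1:ℂ) else 0) * (if j1 = x1 then (1:ℂ) else 0))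
        * ((if i2 = x2 then (1:ℂ) else 0) * (if j2 = x2 then (1:ℂ) else 0))
      = ((if x1 = i1 then (1:ℂ) else 0) * (if x1 = j1 then (1:ℂ) else 0))
        * ((if x2 = i2 then (1:ℂ) else 0) * (if x2 = j2 then (1:ℂ) else 0)) from by
      simp [eq_comm]]
  rw [Finset.sum_congr rfl fun x1 _ => (Finset.mul_sum _ _ _).symm, ← Finset.sum_mul,
    sum_ii, sum_ii]
  split_ifs <;> first | (exfalso; simp only [Prod.ext_iff, Fin.ext_iff] at *; omega) | norm_num

lemma sep_Dm (d : ℕ) : Separable (Dm d) := by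
  refine separable_of_fintype (K := Fin d)
    (fun i => fun m => if m = i then 1 else 0)
    (fun i => fun m => if m = i then 1 else 0) ?_
  ext ⟨i1, i2⟩ ⟨j1, j2⟩
  rw [Matrix.sum_apply]
  simp only [kroneckerMap_apply, vecMulVec_apply, Pi.star_apply, RCLike.star_def,
    apply_ite (starRingEnd ℂ), _root_.map_one, map_zero, Dm, of_apply]
  rw [Finset.sum_congr rfl fun k _ =>
    show ((if i1 = k then (1:ℂ) else 0) * (if j1 = k then (1:ℂ) else 0))
        * ((if i2 = k then (1:ℂ) else 0) * (if j2 = k then (1:ℂ) else 0))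
      = if k = i1 then (if ((i1, i2) = (j1, j2) ∧ i1 = i2) then (1:ℂ) else 0) else 0 from by
      split_ifs <;> first | (exfalso; simp only [Prod.ext_iff, Fin.ext_iff] at *; omega) | norm_num]
  simp

lemma sep_one_sub_Dm (d : ℕ) :
    Separable ((1 : Matrix (Fin d × Fin d) (Fin d × Fin d) ℂ) - Dm d) := by
  refine separable_of_fintype (K := Fin d × Fin d)
    (fun ij => fun m => if m = ij.1 then 1 else 0)
    (fun ij => fun m => if ij.1 = ij.2 then 0 else if m = ij.2 then 1 else 0) ?_
  ext ⟨i1, i2⟩ ⟨j1, j2⟩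
  rw [Matrix.sum_apply, Fintype.sum_prod_type]
  simp only [kroneckerMap_apply, vecMulVec_apply, Pi.star_apply, RCLike.star_def,
    apply_ite (starRingEnd ℂ), _root_.map_one, map_zero, Matrix.sub_apply, Matrix.one_apply,
    Dm, of_apply]
  rw [Finset.sum_congr rfl fun x1 _ => Finset.sum_congr rfl fun x2 _ =>
    show ((if i1 = x1 then (1:ℂ) else 0) * (if j1 = x1 then (1:ℂ) else 0))
        * ((if x1 = x2 then (0:ℂ) else if i2 = x2 then (1:ℂ) else 0)
            * (if x1 = x2 then (0:ℂ) else if j2 = x2 then (1:ℂ) else 0))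
      = ((if x1 = i1 then (1:ℂ) else 0) * (if x1 = j1 then (1:ℂ) else 0))
        * (if x1 = x2 then 0 else
            (if x2 = i2 then (1:ℂ) else 0) * (if x2 = j2 then (1:ℂ) else 0)) from by
      split_ifs <;> first | (exfalso; simp only [Prod.ext_iff, Fin.ext_iff] at *; omega) | norm_num]
  rw [Finset.sum_congr rfl fun x1 _ => (Finset.mul_sum _ _ _).symm]
  have inner : ∀ x1 : Fin d,
      (∑ x2 : Fin d, (if x1 = x2 then (0:ℂ) else
          (if x2 = i2 then (1:ℂ) else 0) * (if x2 = j2 then (1:ℂ) else 0)))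
        = (if i2 = j2 then 1 else 0) - (if x1 = i2 then (1:ℂ) else 0) * (if x1 = j2 then 1 else 0) := by
    intro x1
    rw [Finset.sum_congr rfl fun x2 _ =>
      show (if x1 = x2 then (0:ℂ) else (if x2 = i2 then (1:ℂ) else 0) * (if x2 = j2 then 1 else 0))
        = (if x2 = i2 then (1:ℂ) else 0) * (if x2 = j2 then 1 else 0)
          - (if x2 = x1 then (if x1 = i2 then (1:ℂ) else 0) * (if x1 = j2 then 1 else 0) else 0) from by
        split_ifs <;> first | (exfalso; simp only [Prod.ext_iff, Fin.ext_iff] at *; omega) | norm_num]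
    rw [Finset.sum_sub_distrib, sum_ii]
    simp
  rw [Finset.sum_congr rfl fun x1 _ => by rw [inner x1]]
  simp only [mul_sub]
  rw [Finset.sum_sub_distrib, ← Finset.sum_mul, sum_ii]
  have h2 : (∑ x1 : Fin d,
      ((if x1 = i1 then (1:ℂ) else 0) * (if x1 = j1 then (1:ℂ) else 0))
        * ((if x1 = i2 then (1:ℂ) else 0) * (if x1 = j2 then (1:ℂ) else 0)))
      = if (i1 = j1 ∧ i2 = j2) ∧ i1 = i2 then 1 else 0 := by
    rw [Finset.sum_congr rfl fun k _ =>
      show ((if k = i1 then (1:ℂ) else 0) * (if k = j1 then (1:ℂ) else 0))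
          * ((if k = i2 then (1:ℂ) else 0) * (if k = j2 then (1:ℂ) else 0))
        = if k = i1 then (if ((i1 = j1 ∧ i2 = j2) ∧ i1 = i2) then (1:ℂ) else 0) else 0 from by
        split_ifs <;> first | (exfalso; simp only [Prod.ext_iff, Fin.ext_iff] at *; omega) | norm_num]
    simp
  rw [h2]
  split_ifs <;> first | (exfalso; simp only [Prod.ext_iff, Fin.ext_iff] at *; omega) | norm_num

lemma sep_gen_w11 (d : ℕ) : Separable (1 + Fm d - Dm d) := by
  have hs : Separable (∑ c : Fin d → Fin 4,
      vecMulVec (fun m => Complex.I ^ (c m : ℕ)) (star fun m => Complex.I ^ (c m : ℕ))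
        ⊗ₖ vecMulVec (fun m => Complex.I ^ (c m : ℕ)) (star fun m => Complex.I ^ (c m : ℕ))) :=
    separable_of_fintype _ _ rfl
  have h2 := Separable.smul (t := ((4 : ℝ) ^ d)⁻¹) (by positivity) hs
  rw [key_w11 d, smul_smul,
    show ((((4 : ℝ) ^ d)⁻¹ : ℝ) : ℂ) * (4 : ℂ) ^ d = 1 by
      push_cast
      field_simp, one_smul] at h2
  exact h2

lemma sep_gen_iso11 (d : ℕ) : Separable (1 + Qm d - Dm d) := by
  have hs : Separable (∑ c : Fin d → Fin 4,
      vecMulVec (fun m => Complex.I ^ (c m : ℕ)) (star fun m => Complex.I ^ (c m : ℕ))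
        ⊗ₖ vecMulVec (fun m => (-Complex.I) ^ (c m : ℕ)) (star fun m => (-Complex.I) ^ (c m : ℕ))) :=
    separable_of_fintype _ _ rfl
  have h2 := Separable.smul (t := ((4 : ℝ) ^ d)⁻¹) (by positivity) hs
  rw [key_iso11 d, smul_smul,
    show ((((4 : ℝ) ^ d)⁻¹ : ℝ) : ℂ) * (4 : ℂ) ^ d = 1 by
      push_cast
      field_simp, one_smul] at h2
  exact h2

lemma sep_gen_wd {d : ℕ} (hd : 0 < d) : Separable (((d : ℂ) - 1) • 1 - Fm d + Dm d) := by
  have hs : Separable (∑ ck : (Fin d → Fin 4) × Fin d,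
      vecMulVec (fun m => Complex.I ^ (ck.1 m : ℕ)) (star fun m => Complex.I ^ (ck.1 m : ℕ))
        ⊗ₖ vecMulVec (fun m => Complex.I ^ (ck.1 m : ℕ) * ((d : ℂ) * (if ck.2 = m then 1 else 0) - 1))
            (star fun m => Complex.I ^ (ck.1 m : ℕ) * ((d : ℂ) * (if ck.2 = m then 1 else 0) - 1))) :=
    separable_of_fintype _ _ rfl
  have hd' : (0:ℝ) < (d : ℝ) := by exact_mod_cast hd
  have h2 := Separable.smul (t := ((4 : ℝ) ^ d * d)⁻¹) (by positivity) hs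
  rw [key_wd d, smul_smul,
    show ((((4 : ℝ) ^ d * d)⁻¹ : ℝ) : ℂ) * ((4 : ℂ) ^ d * d) = 1 by
      push_cast
      field_simp, one_smul] at h2
  exact h2

lemma sep_gen_isod {d : ℕ} (hd : 0 < d) : Separable (((d : ℂ) - 1) • 1 - Qm d + Dm d) := by
  have hs : Separable (∑ ck : (Fin d → Fin 4) × Fin d,
      vecMulVec (fun m => Complex.I ^ (ck.1 m : ℕ)) (star fun m => Complex.I ^ (ck.1 m : ℕ))
        ⊗ₖ vecMulVec (fun m => (-Complex.I) ^ (ck.1 m : ℕ) * ((d : ℂ) * (if ck.2 = m then 1 else 0) - 1))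
            (star fun m => (-Complex.I) ^ (ck.1 m : ℕ) * ((d : ℂ) * (if ck.2 = m then 1 else 0) - 1))) :=
    separable_of_fintype _ _ rfl
  have hd' : (0:ℝ) < (d : ℝ) := by exact_mod_cast hd
  have h2 := Separable.smul (t := ((4 : ℝ) ^ d * d)⁻¹) (by positivity) hs
  rw [key_isod d, smul_smul,
    show ((((4 : ℝ) ^ d * d)⁻¹ : ℝ) : ℂ) * ((4 : ℂ) ^ d * d) = 1 by
      push_cast
      field_simp, one_smul] at h2
  exact h2

lemma sep_werner {d : ℕ} (hd : 2 ≤ d) {a b : ℝ} (ha : 0 ≤ a) (hbd : -a / d ≤ b)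
    (hba : b ≤ a) : Separable (werner d a b) := by
  have hd' : (0:ℝ) < (d:ℝ) := by
    have : 0 < d := by omega
    exact_mod_cast this
  set α : ℝ := (a + d * b) / (d + 1) with hα_def
  set γ : ℝ := (a - b) / (d + 1) with hγ_def
  have hnum : 0 ≤ a + d * b := by
    rw [div_le_iff₀ hd'] at hbd
    linarith
  have hα : 0 ≤ α := by positivity
  have hγ : 0 ≤ γ := div_nonneg (by linarith) (by linarith)
  have h1 : α + γ * d = a := by
    rw [hα_def, hγ_def]
    field_simp
    ring
  have h2 : α - γ = b := by
    rw [hα_def, hγ_def]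
    field_simp
    ring
  have key : werner d a b
      = (α : ℂ) • (1 + Fm d - Dm d) + (α : ℂ) • Dm d
        + ((γ : ℂ) • (((d : ℂ) - 1) • 1 - Fm d + Dm d) + (γ : ℂ) • (1 - Dm d)) := by
    have e1 : (a : ℂ) = (α : ℂ) + (γ : ℂ) * (d : ℂ) := by
      rw [← h1]; push_cast; ring
    have e2 : (b : ℂ) = (α : ℂ) - (γ : ℂ) := by
      rw [← h2]; push_cast; ring
    show (a : ℂ) • (1 : Matrix (Fin d × Fin d) (Fin d × Fin d) ℂ) + (b : ℂ) • Fm d = _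
    rw [e1, e2]
    module
  rw [key]
  exact Separable.add
    (Separable.add (Separable.smul hα (sep_gen_w11 d)) (Separable.smul hα (sep_Dm d)))
    (Separable.add (Separable.smul hγ (sep_gen_wd (by omega))) (Separable.smul hγ (sep_one_sub_Dm d)))

lemma sep_isotropic {d : ℕ} (hd : 2 ≤ d) {a b : ℝ} (ha : 0 ≤ a) (hbd : -a / d ≤ b)
    (hba : b ≤ a) : Separable (isotropic d a b) := by
  have hd' : (0:ℝ) < (d:ℝ) := by
    have : 0 < d := by omega
    exact_mod_cast this
  set α : ℝ := (a + d * b) / (d + 1) with hα_def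
  set γ : ℝ := (a - b) / (d + 1) with hγ_def
  have hnum : 0 ≤ a + d * b := by
    rw [div_le_iff₀ hd'] at hbd
    linarith
  have hα : 0 ≤ α := by positivity
  have hγ : 0 ≤ γ := div_nonneg (by linarith) (by linarith)
  have h1 : α + γ * d = a := by
    rw [hα_def, hγ_def]
    field_simp
    ring
  have h2 : α - γ = b := by
    rw [hα_def, hγ_def]
    field_simp
    ring
  have key : isotropic d a b
      = (α : ℂ) • (1 + Qm d - Dm d) + (α : ℂ) • Dm d
        + ((γ : ℂ) • (((d : ℂ) - 1) • 1 - Qm d + Dm d) + (γ : ℂ) • (1 - Dm d)) := by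
    have e1 : (a : ℂ) = (α : ℂ) + (γ : ℂ) * (d : ℂ) := by
      rw [← h1]; push_cast; ring
    have e2 : (b : ℂ) = (α : ℂ) - (γ : ℂ) := by
      rw [← h2]; push_cast; ring
    show (a : ℂ) • (1 : Matrix (Fin d × Fin d) (Fin d × Fin d) ℂ) + (b : ℂ) • Qm d = _
    rw [e1, e2]
    module
  rw [key]
  exact Separable.add
    (Separable.add (Separable.smul hα (sep_gen_iso11 d)) (Separable.smul hα (sep_Dm d)))
    (Separable.add (Separable.smul hγ (sep_gen_isod (by omega))) (Separable.smul hγ (sep_one_sub_Dm d)))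

lemma sum_eq_pair {d : ℕ} (u v : Fin d) (f : Fin d × Fin d → ℂ) :
    (∑ x : Fin d × Fin d, if x.1 = u ∧ x.2 = v then f x else 0) = f (u, v) := by
  rw [Fintype.sum_prod_type]
  rw [Finset.sum_congr rfl fun x _ => Finset.sum_congr rfl fun x1 _ =>
    show (if x = u ∧ x1 = v then f (x, x1) else 0)
      = if x1 = v then (if x = u then f (x, x1) else 0) else 0 from by
      split_ifs <;> first | rfl | tauto]
  simp [Finset.sum_ite_eq, Finset.sum_ite_eq']

lemma psd_constraints {d : ℕ} (hd : 2 ≤ d) {a b : ℝ}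
    (hW : (werner d a b).PosSemidef) (hI : (isotropic d a b).PosSemidef) :
    0 ≤ a ∧ -a / d ≤ b ∧ b ≤ a := by
  have hd0 : 0 < d := by omega
  have hd' : (0:ℝ) < (d:ℝ) := by exact_mod_cast hd0
  set z0 : Fin d := ⟨0, by omega⟩ with hz0
  set z1 : Fin d := ⟨1, by omega⟩ with hz1
  have hne : ¬ z0 = z1 := by simp [hz0, hz1, Fin.ext_iff]
  have hne' : ¬ z1 = z0 := by simp [hz0, hz1, Fin.ext_iff]
  have ha : 0 ≤ a := by
    have h := hW.dotProduct_mulVec_nonneg (fun p => if p = (z0, z1) then 1 else 0)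
    have hval : dotProduct (star fun p : Fin d × Fin d => if p = (z0, z1) then (1:ℂ) else 0)
        ((werner d a b) *ᵥ fun p => if p = (z0, z1) then (1:ℂ) else 0) = (a : ℂ) := by
      simp [dotProduct, mulVec, werner, Matrix.one_apply, apply_ite (starRingEnd ℂ),
        mul_ite, ite_mul, Finset.sum_ite_eq, Finset.sum_ite_eq', Prod.ext_iff, sum_eq_pair,
        hne, hne']
    rw [hval] at h
    exact Complex.zero_le_real.mp h
  have hab : b ≤ a := by
    have h := hW.dotProduct_mulVec_nonneg (fun p => (if p = (z0, z1) then (1:ℂ) else 0) - (if p = (z1, z0) then 1 else 0))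
    have hval : dotProduct
        (star fun p : Fin d × Fin d => (if p = (z0, z1) then (1:ℂ) else 0) - (if p = (z1, z0) then 1 else 0))
        ((werner d a b) *ᵥ fun p => (if p = (z0, z1) then (1:ℂ) else 0) - (if p = (z1, z0) then 1 else 0))
        = ((2 * a - 2 * b : ℝ) : ℂ) := by
      simp [dotProduct, mulVec, werner, Matrix.one_apply, apply_ite (starRingEnd ℂ),
        mul_ite, ite_mul, mul_sub, sub_mul, Finset.sum_sub_distrib, Prod.ext_iff, sum_eq_pair,
        hne, hne']
      push_cast
      ring
    rw [hval] at h
    have h2 := Complex.zero_le_real.mp h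
    linarith
  have hdb : -a / d ≤ b := by
    have hdiag : (∑ q : Fin d × Fin d, if q.1 = q.2 then (1:ℂ) else 0) = (d : ℂ) := by
      rw [Fintype.sum_prod_type]
      simp [Finset.sum_ite_eq, Finset.sum_ite_eq']
    have h := hI.dotProduct_mulVec_nonneg (fun p => if p.1 = p.2 then 1 else 0)
    have inner : ∀ p : Fin d × Fin d,
        ((isotropic d a b) *ᵥ fun q : Fin d × Fin d => if q.1 = q.2 then (1:ℂ) else 0) p
          = ((a : ℂ) + (b : ℂ) * d) * (if p.1 = p.2 then 1 else 0) := by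
      intro p
      simp only [mulVec, dotProduct, isotropic, Matrix.add_apply, Matrix.smul_apply,
        Matrix.one_apply, of_apply, smul_eq_mul]
      rw [Finset.sum_congr rfl fun q _ =>
        show ((a:ℂ) * (if p = q then 1 else 0) + (b:ℂ) * (if p.1 = p.2 ∧ q.1 = q.2 then 1 else 0))
            * (if q.1 = q.2 then 1 else 0)
          = (a:ℂ) * (if q = p then (if p.1 = p.2 then (1:ℂ) else 0) else 0)
            + ((b:ℂ) * (if p.1 = p.2 then 1 else 0)) * (if q.1 = q.2 then 1 else 0) from by
          split_ifs <;>
            first | (exfalso; simp only [Prod.ext_iff, Fin.ext_iff] at *; omega) | norm_num | ring]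
      rw [Finset.sum_add_distrib, ← Finset.mul_sum, ← Finset.mul_sum, hdiag]
      simp [Finset.sum_ite_eq, Finset.sum_ite_eq']
      split_ifs <;> ring
    have hval : dotProduct (star fun p : Fin d × Fin d => if p.1 = p.2 then (1:ℂ) else 0)
        ((isotropic d a b) *ᵥ fun q : Fin d × Fin d => if q.1 = q.2 then (1:ℂ) else 0)
        = ((d * a + d^2 * b : ℝ) : ℂ) := by
      rw [dotProduct]
      rw [Finset.sum_congr rfl fun p _ => by rw [inner p]]
      simp only [Pi.star_apply, RCLike.star_def, apply_ite (starRingEnd ℂ), _root_.map_one,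
        map_zero]
      rw [Finset.sum_congr rfl fun p _ =>
        show (if p.1 = p.2 then (1:ℂ) else 0) * (((a : ℂ) + (b : ℂ) * d) * (if p.1 = p.2 then 1 else 0))
          = ((a : ℂ) + (b : ℂ) * d) * (if p.1 = p.2 then 1 else 0) from by
          split_ifs <;> ring]
      rw [← Finset.mul_sum, hdiag]
      push_cast
      ring
    rw [hval] at h
    have h2 := Complex.zero_le_real.mp h
    rw [div_le_iff₀ hd']
    nlinarith
  exact ⟨ha, hdb, hab⟩

theorem stmt9 {d : ℕ} (hd : 2 ≤ d) (a b : ℝ) :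
    [IsPPT (werner d a b),
     Separable (werner d a b),
     Separable (isotropic d a b),
     IsPPT (isotropic d a b),
     0 ≤ a ∧ -a / d ≤ b ∧ b ≤ a].TFAE := by
  tfae_have 2 → 1
  | h => ⟨h.posSemidef, h.partialTranspose.posSemidef⟩
  tfae_have 3 → 4
  | h => ⟨h.posSemidef, h.partialTranspose.posSemidef⟩
  tfae_have 1 → 5
  | h => psd_constraints hd h.1 (by rw [← pT_werner a b]; exact h.2)
  tfae_have 4 → 5
  | h => psd_constraints hd (by rw [← pT_isotropic a b]; exact h.2) h.1
  tfae_have 5 → 2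
  | h => sep_werner hd h.1 h.2.1 h.2.2
  tfae_have 5 → 3
  | h => sep_isotropic hd h.1 h.2.1 h.2.2
  tfae_finish
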